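/- Let u, v ∈ ℂ^n be unit vectors with x := |⟨u,v⟩|, let A := (1/2)(u u* + v v*), and let λ₁, …, λ_n be the real eigenvalues of the Hermitian matrix A counted with multiplicity. Then the von Neumann entropy of A satisfies Σ_{i=1}^n (−λ_i · log₂ λ_i) = 1 − (1/2)(1−x)·log₂(1−x) − (1/2)(1+x)·log₂(1+x), with the convention 0 · log₂ 0 = 0. (This is the entropy computation H(AB)_{ψ}[x] = 1 − ½(1−x)log₂(1−x) − ½(1+x)log₂(1+x) for the uniform mixture of two pure states with overlap x.) -/

import Mathlib

open Matrix

/-- The rank-one outer product `u u*` of a vector, with entries `u_i · conj (u_j)`. -/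
def outer {n : ℕ} (u : Fin n → ℂ) : Matrix (Fin n) (Fin n) ℂ :=
  Matrix.vecMulVec u (star u)

/-- The summand `−λ·log₂ λ` of the von Neumann entropy, with the convention
`0 · log₂ 0 = 0` (note `Real.logb 2 0 = 0` in Mathlib). -/
noncomputable def negMulLog2 (l : ℝ) : ℝ := -(l * Real.logb 2 l)

lemma vecMulVec_mul_vecMulVec {n : ℕ} (a b c d : Fin n → ℂ) :
    vecMulVec a b * vecMulVec c d = (b ⬝ᵥ c) • vecMulVec a d := by
  ext i j
  simp only [mul_apply, vecMulVec_apply, Matrix.smul_apply, dotProduct, smul_eq_mul,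
    Finset.sum_mul]
  exact Finset.sum_congr rfl fun k _ => by ring

lemma trace_vecMulVec {n : ℕ} (a b : Fin n → ℂ) :
    trace (vecMulVec a b) = b ⬝ᵥ a := by
  simp [trace, vecMulVec_apply, dotProduct, diag, mul_comm]

lemma rank_add_le' {n : ℕ} (M N : Matrix (Fin n) (Fin n) ℂ) :
    (M + N).rank ≤ M.rank + N.rank := by
  have hle : LinearMap.range (M + N).mulVecLin ≤
      LinearMap.range M.mulVecLin ⊔ LinearMap.range N.mulVecLin := by
    rintro y ⟨x, rfl⟩
    rw [mulVecLin_add]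
    exact Submodule.add_mem_sup (LinearMap.mem_range_self _ x)
      (LinearMap.mem_range_self _ x)
  calc (M + N).rank ≤ Module.finrank ℂ
        ↥(LinearMap.range M.mulVecLin ⊔ LinearMap.range N.mulVecLin) :=
        Submodule.finrank_mono hle
    _ ≤ M.rank + N.rank := Submodule.finrank_add_le_finrank_add_finrank _ _

lemma rank_outer_le {n : ℕ} (w : Fin n → ℂ) : (outer w).rank ≤ 1 := by
  rw [outer, vecMulVec_eq (Fin 1)]
  calc (replicateCol (Fin 1) w * replicateRow (Fin 1) (star w)).rank
      ≤ (replicateRow (Fin 1) (star w)).rank := rank_mul_le_right _ _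
    _ ≤ Fintype.card (Fin 1) := rank_le_card_height _
    _ = 1 := by simp

/-- The final real-number computation. -/
lemma entropy_two_point (x : ℝ) (h1 : 0 < 1 - x) (h2 : 0 < 1 + x) :
    negMulLog2 ((1 + x) / 2) + negMulLog2 ((1 - x) / 2)
      = 1 - (1 / 2) * (1 - x) * Real.logb 2 (1 - x)
          - (1 / 2) * (1 + x) * Real.logb 2 (1 + x) := by
  unfold negMulLog2
  rw [Real.logb_div (by linarith) (by norm_num),
    Real.logb_div (by linarith) (by norm_num),
    Real.logb_self_eq_one (by norm_num)]
  ring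

lemma real_key {n : ℕ} (f : Fin n → ℝ) (x : ℝ) (hx0 : 0 ≤ x)
    (hnn : ∀ i, 0 ≤ f i) (h1 : ∑ i, f i = 1)
    (h2 : ∑ i, (f i) ^ 2 = (1 + x ^ 2) / 2)
    (hcard : (Finset.univ.filter (fun i => f i ≠ 0)).card ≤ 2) :
    ∑ i, negMulLog2 (f i)
      = 1 - (1 / 2) * (1 - x) * Real.logb 2 (1 - x)
          - (1 / 2) * (1 + x) * Real.logb 2 (1 + x) := by
  classical
  set s := Finset.univ.filter (fun i => f i ≠ 0) with hs
  have hmem : ∀ i ∈ s, f i ≠ 0 := fun i hi => (Finset.mem_filter.mp hi).2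
  have hzero : ∀ i ∈ Finset.univ, i ∉ s → f i = 0 := by
    intro i _ hi
    by_contra h
    exact hi (Finset.mem_filter.mpr ⟨Finset.mem_univ i, h⟩)
  have hsum1 : ∑ i ∈ s, f i = 1 := by
    rw [← h1]
    exact (Finset.sum_subset (Finset.filter_subset _ _)
      (fun i hi h => hzero i hi h)).symm ▸ rfl
  have hsum2 : ∑ i ∈ s, (f i) ^ 2 = (1 + x ^ 2) / 2 := by
    rw [← h2]
    refine (Finset.sum_subset (Finset.filter_subset _ _) ?_)
    intro i hi h
    rw [hzero i hi h]; ring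
  have hsumE : ∑ i, negMulLog2 (f i) = ∑ i ∈ s, negMulLog2 (f i) := by
    refine (Finset.sum_subset (Finset.filter_subset _ _) ?_).symm
    intro i hi h
    rw [hzero i hi h]
    simp [negMulLog2]
  rw [hsumE]
  interval_cases hc : s.card
  · rw [Finset.card_eq_zero] at hc
    rw [hc] at hsum1
    simp at hsum1
  · obtain ⟨i, hsi⟩ := Finset.card_eq_one.mp hc
    rw [hsi, Finset.sum_singleton] at hsum1 hsum2 ⊢
    have hx1 : x = 1 := by nlinarith
    subst hx1
    rw [hsum1]
    simp [negMulLog2, Real.logb_self_eq_one (by norm_num : (1:ℝ) < 2)]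
    norm_num [Real.logb_self_eq_one]
  · obtain ⟨i, j, hij, hsij⟩ := Finset.card_eq_two.mp hc
    have hi : f i ≠ 0 := hmem i (hsij ▸ Finset.mem_insert_self _ _)
    have hj : f j ≠ 0 := hmem j (hsij ▸ Finset.mem_insert_of_mem (Finset.mem_singleton_self _))
    have hia : 0 < f i := lt_of_le_of_ne (hnn i) (Ne.symm hi)
    have hja : 0 < f j := lt_of_le_of_ne (hnn j) (Ne.symm hj)
    rw [hsij, Finset.sum_pair hij] at hsum1 hsum2 ⊢
    have hsq : (f i - f j) ^ 2 = x ^ 2 := by nlinarith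
    have hd : f i - f j = x ∨ f i - f j = -x := by
      rcases sq_eq_sq_iff_eq_or_eq_neg.mp hsq with h | h
      · exact Or.inl h
      · exact Or.inr h
    rcases hd with h | h
    · have ha : f i = (1 + x) / 2 := by linarith
      have hb : f j = (1 - x) / 2 := by linarith
      rw [ha, hb]
      exact entropy_two_point x (by rw [hb] at hja; linarith) (by linarith)
    · have ha : f i = (1 - x) / 2 := by linarith
      have hb : f j = (1 + x) / 2 := by linarith
      rw [ha, hb, add_comm]
      exact entropy_two_point x (by rw [ha] at hia; linarith) (by linarith)

open scoped ComplexOrder in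
lemma dot_outer {n : ℕ} (w y : Fin n → ℂ) :
    star y ⬝ᵥ (outer w *ᵥ y) = ((Complex.normSq (star w ⬝ᵥ y) : ℝ) : ℂ) := by
  have h : star y ⬝ᵥ (outer w *ᵥ y) = star (star w ⬝ᵥ y) * (star w ⬝ᵥ y) := by
    simp only [outer, dotProduct, mulVec, vecMulVec_apply, Finset.mul_sum, Finset.sum_mul,
      star_sum, star_mul', star_star, Pi.star_apply]
    rw [Finset.sum_comm]
    exact Finset.sum_congr rfl fun i _ => Finset.sum_congr rfl fun j _ => by ring
  rw [h, mul_comm, Complex.star_def, Complex.mul_conj]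

open scoped ComplexOrder in
lemma eigs_nonneg_aux {n : ℕ} (u v : Fin n → ℂ)
    (A : Matrix (Fin n) (Fin n) ℂ)
    (hAdef : A = ((1 : ℂ) / 2) • (outer u + outer v))
    (hA : A.IsHermitian) : ∀ i, 0 ≤ hA.eigenvalues i := by
  have hApsd : A.PosSemidef := by
    refine .of_dotProduct_mulVec_nonneg hA fun y => ?_
    rw [hAdef, smul_mulVec, add_mulVec, dotProduct_smul, dotProduct_add,
      dot_outer, dot_outer, smul_eq_mul]
    have e : ((1:ℂ)/2) * ((Complex.normSq (star u ⬝ᵥ y) : ℝ) + (Complex.normSq (star v ⬝ᵥ y) : ℝ))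
        = (((Complex.normSq (star u ⬝ᵥ y) + Complex.normSq (star v ⬝ᵥ y)) / 2 : ℝ) : ℂ) := by
      push_cast; ring
    rw [e]
    exact Complex.zero_le_real.mpr
      (div_nonneg (add_nonneg (Complex.normSq_nonneg _) (Complex.normSq_nonneg _)) (by norm_num))
  exact fun i => hApsd.eigenvalues_nonneg i

/-- The entropy computation for the uniform mixture of two pure states with
overlap `x`:
`Σ_i (−λ_i log₂ λ_i) = 1 − ½(1−x)log₂(1−x) − ½(1+x)log₂(1+x)`. -/
theorem entropy_uniform_mixture_two_pure {n : ℕ}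
    (u v : Fin n → ℂ) (hu : star u ⬝ᵥ u = 1) (hv : star v ⬝ᵥ v = 1)
    (x : ℝ) (hx : x = ‖star u ⬝ᵥ v‖)
    (A : Matrix (Fin n) (Fin n) ℂ)
    (hAdef : A = ((1 : ℂ) / 2) • (outer u + outer v))
    (hA : A.IsHermitian) :
    ∑ i, negMulLog2 (hA.eigenvalues i)
      = 1 - (1 / 2) * (1 - x) * Real.logb 2 (1 - x)
          - (1 / 2) * (1 + x) * Real.logb 2 (1 + x) := by
  classical
  have hx0 : 0 ≤ x := hx ▸ norm_nonneg _
  have hpc : star v ⬝ᵥ u = star (star u ⬝ᵥ v) := by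
    simp [dotProduct, mul_comm]
  have hnn : ∀ i, 0 ≤ hA.eigenvalues i := eigs_nonneg_aux u v A hAdef hA
  obtain ⟨U, hU1, hspec⟩ : ∃ U : Matrix (Fin n) (Fin n) ℂ, star U * U = 1 ∧
      A = U * diagonal (RCLike.ofReal ∘ hA.eigenvalues) * star U :=
    ⟨_, Matrix.mem_unitaryGroup_iff'.mp (hA.eigenvectorUnitary).2, hA.spectral_theorem⟩
  have htr1 : trace A = ∑ i, (hA.eigenvalues i : ℂ) := by
    have h' := congrArg trace hspec
    rw [trace_mul_cycle, hU1, one_mul, trace_diagonal] at h'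
    simpa using h'
  have htr2 : trace (A * A) = ∑ i, (hA.eigenvalues i : ℂ) ^ 2 := by
    set D : Matrix (Fin n) (Fin n) ℂ := diagonal (RCLike.ofReal ∘ hA.eigenvalues) with hD
    have h' := congrArg (fun M => (M * M).trace) hspec
    have e : (U * D * star U) * (U * D * star U) = U * (D * D) * star U := by
      simp only [Matrix.mul_assoc]
      rw [← Matrix.mul_assoc (star U) U, hU1, one_mul]
    rw [e, trace_mul_cycle, hU1, one_mul, diagonal_mul_diagonal,
      trace_diagonal] at h'
    simpa [pow_two] using h'
  have t1 : trace A = 1 := by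
    rw [hAdef, trace_smul, trace_add, outer, outer, _root_.trace_vecMulVec, _root_.trace_vecMulVec, hu, hv]
    norm_num
  have hpp : (star u ⬝ᵥ v) * star (star u ⬝ᵥ v) = ((x : ℂ)) ^ 2 := by
    rw [hx, Complex.star_def, Complex.mul_conj]
    norm_cast
    rw [Complex.sq_norm]
  have t2 : trace (A * A) = (((1 + x ^ 2) / 2 : ℝ) : ℂ) := by
    rw [hAdef, smul_mul_assoc, mul_smul_comm, smul_smul, add_mul, mul_add, mul_add]
    simp only [outer, _root_.vecMulVec_mul_vecMulVec, trace_smul, trace_add, _root_.trace_vecMulVec,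
      smul_eq_mul]
    rw [hu, hv, hpc, hpp, mul_comm (star (star u ⬝ᵥ v)) (star u ⬝ᵥ v), hpp]
    push_cast
    ring
  have h1 : ∑ i, hA.eigenvalues i = 1 := by
    have := htr1.symm.trans t1
    exact_mod_cast this
  have h2 : ∑ i, (hA.eigenvalues i) ^ 2 = (1 + x ^ 2) / 2 := by
    have := htr2.symm.trans t2
    exact_mod_cast this
  have hrank : A.rank ≤ 2 := by
    rw [hAdef, smul_eq_diagonal_mul]
    calc (diagonal (fun _ => (1:ℂ)/2) * (outer u + outer v)).rank
        ≤ (outer u + outer v).rank := rank_mul_le_right _ _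
      _ ≤ (outer u).rank + (outer v).rank := rank_add_le' _ _
      _ ≤ 2 := by
          have h1 := rank_outer_le u
          have h2 := rank_outer_le v
          omega
  have hcard : (Finset.univ.filter (fun i => hA.eigenvalues i ≠ 0)).card ≤ 2 := by
    have hre := hA.rank_eq_card_non_zero_eigs
    rw [Fintype.card_subtype] at hre
    omega
  exact real_key _ x hx0 hnn h1 h2 hcard
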